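/- Let H and H' be finite-dimensional Hopf algebras over ℂ with bijective antipodes, and let f : H → H' be a surjective bialgebra homomorphism (so H' is a Hopf algebra quotient of H). If a positive integer n satisfies the quasi-exponent condition for H, then n satisfies the quasi-exponent condition for H'. In particular, the quasi-exponent of any Hopf algebra quotient of H divides qexp(H). -/

import Mathlib

open TensorProduct

open Coalgebra LinearMap HopfAlgebra


section Conv
variable {R : Type*} [CommRing R] {C : Type*} [AddCommGroup C] [Module R C]
  {A : Type*} [Ring A] [Algebra R A]

/-- Convolution product of linear maps from a coalgebra to an algebra. -/
noncomputable def convP [CoalgebraStruct R C] (f g : C →ₗ[R] A) : C →ₗ[R] A :=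
  LinearMap.mul' R A ∘ₗ TensorProduct.map f g ∘ₗ Coalgebra.comul

variable [Coalgebra R C]

lemma convP_unit_left (f : C →ₗ[R] A) :
    convP (Algebra.linearMap R A ∘ₗ Coalgebra.counit) f = f := by
  unfold convP
  have h1 : TensorProduct.map (Algebra.linearMap R A ∘ₗ Coalgebra.counit) f
      = TensorProduct.map (Algebra.linearMap R A) f ∘ₗ
        (Coalgebra.counit (R := R) (A := C)).rTensor C := by
    apply TensorProduct.ext'; intro x y; simp
  rw [h1, LinearMap.comp_assoc, Coalgebra.rTensor_counit_comp_comul]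
  ext c
  simp [Algebra.algebraMap_eq_smul_one]

lemma convP_unit_right (f : C →ₗ[R] A) :
    convP f (Algebra.linearMap R A ∘ₗ Coalgebra.counit) = f := by
  unfold convP
  have h1 : TensorProduct.map f (Algebra.linearMap R A ∘ₗ Coalgebra.counit)
      = TensorProduct.map f (Algebra.linearMap R A) ∘ₗ
        (Coalgebra.counit (R := R) (A := C)).lTensor C := by
    apply TensorProduct.ext'; intro x y; simp
  rw [h1, LinearMap.comp_assoc, Coalgebra.lTensor_counit_comp_comul]
  ext c
  simp [Algebra.algebraMap_eq_smul_one]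

lemma convP_assoc (f g h : C →ₗ[R] A) :
    convP (convP f g) h = convP f (convP g h) := by
  unfold convP
  have key : LinearMap.mul' R A ∘ₗ
        TensorProduct.map (LinearMap.mul' R A ∘ₗ TensorProduct.map f g) h
      = (LinearMap.mul' R A ∘ₗ
          TensorProduct.map f (LinearMap.mul' R A ∘ₗ TensorProduct.map g h)) ∘ₗ
        (TensorProduct.assoc R C C C).toLinearMap := by
    apply TensorProduct.ext_threefold
    intro x y z
    simp [mul_assoc]
  have l1 : TensorProduct.map (LinearMap.mul' R A ∘ₗ TensorProduct.map f g ∘ₗ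
        Coalgebra.comul) h
      = TensorProduct.map (LinearMap.mul' R A ∘ₗ TensorProduct.map f g) h ∘ₗ
        (Coalgebra.comul (R := R) (A := C)).rTensor C := by
    apply TensorProduct.ext'; intro x y; simp
  have l2 : TensorProduct.map f (LinearMap.mul' R A ∘ₗ TensorProduct.map g h ∘ₗ
        Coalgebra.comul)
      = TensorProduct.map f (LinearMap.mul' R A ∘ₗ TensorProduct.map g h) ∘ₗ
        (Coalgebra.comul (R := R) (A := C)).lTensor C := by
    apply TensorProduct.ext'; intro x y; simp
  rw [l1, l2]
  calc LinearMap.mul' R A ∘ₗ (TensorProduct.map (LinearMap.mul' R A ∘ₗ TensorProduct.map f g) h ∘ₗ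
        (Coalgebra.comul (R := R) (A := C)).rTensor C) ∘ₗ Coalgebra.comul
      = (LinearMap.mul' R A ∘ₗ
          TensorProduct.map (LinearMap.mul' R A ∘ₗ TensorProduct.map f g) h) ∘ₗ
        ((Coalgebra.comul (R := R) (A := C)).rTensor C ∘ₗ Coalgebra.comul) := by
        simp only [LinearMap.comp_assoc]
    _ = ((LinearMap.mul' R A ∘ₗ
          TensorProduct.map f (LinearMap.mul' R A ∘ₗ TensorProduct.map g h)) ∘ₗ
        (TensorProduct.assoc R C C C).toLinearMap) ∘ₗ
        ((Coalgebra.comul (R := R) (A := C)).rTensor C ∘ₗ Coalgebra.comul) := by rw [key]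
    _ = (LinearMap.mul' R A ∘ₗ
          TensorProduct.map f (LinearMap.mul' R A ∘ₗ TensorProduct.map g h)) ∘ₗ
        ((TensorProduct.assoc R C C C).toLinearMap ∘ₗ
          (Coalgebra.comul (R := R) (A := C)).rTensor C ∘ₗ Coalgebra.comul) := by
        simp only [LinearMap.comp_assoc]
    _ = (LinearMap.mul' R A ∘ₗ
          TensorProduct.map f (LinearMap.mul' R A ∘ₗ TensorProduct.map g h)) ∘ₗ
        ((Coalgebra.comul (R := R) (A := C)).lTensor C ∘ₗ Coalgebra.comul) := by
        rw [Coalgebra.coassoc]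
    _ = LinearMap.mul' R A ∘ₗ (TensorProduct.map f (LinearMap.mul' R A ∘ₗ TensorProduct.map g h) ∘ₗ
        (Coalgebra.comul (R := R) (A := C)).lTensor C) ∘ₗ Coalgebra.comul := by
        simp only [LinearMap.comp_assoc]

end Conv

section BH2
variable {R H H' : Type*} [CommRing R] [Ring H] [HopfAlgebra R H] [Ring H'] [HopfAlgebra R H']
  (f : H →ₐc[R] H')

lemma bialg_mul'_comp : LinearMap.mul' R H' ∘ₗ TensorProduct.map (f : H →ₗ[R] H') (f : H →ₗ[R] H')
    = (f : H →ₗ[R] H') ∘ₗ LinearMap.mul' R H := by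
  apply TensorProduct.ext'; intro x y; simp

lemma bialg_unit_comp : (f : H →ₗ[R] H') ∘ₗ Algebra.linearMap R H = Algebra.linearMap R H' := by
  ext r; simp

lemma claim1 : convP (R := R) ((f : H →ₗ[R] H') ∘ₗ HopfAlgebra.antipode R) (f : H →ₗ[R] H')
    = Algebra.linearMap R H' ∘ₗ Coalgebra.counit := by
  unfold convP
  have h1 : TensorProduct.map ((f : H →ₗ[R] H') ∘ₗ HopfAlgebra.antipode R) (f : H →ₗ[R] H')
      = TensorProduct.map (f : H →ₗ[R] H') (f : H →ₗ[R] H') ∘ₗ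
        (HopfAlgebra.antipode (R := R) (A := H)).rTensor H := by
    apply TensorProduct.ext'; intro x y; simp
  rw [h1]
  calc LinearMap.mul' R H' ∘ₗ (TensorProduct.map (f : H →ₗ[R] H') (f : H →ₗ[R] H') ∘ₗ
        (HopfAlgebra.antipode (R := R) (A := H)).rTensor H) ∘ₗ Coalgebra.comul
      = ((f : H →ₗ[R] H') ∘ₗ LinearMap.mul' R H) ∘ₗ
        (HopfAlgebra.antipode (R := R) (A := H)).rTensor H ∘ₗ Coalgebra.comul := by
        rw [← bialg_mul'_comp]; simp only [LinearMap.comp_assoc]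
    _ = (f : H →ₗ[R] H') ∘ₗ (LinearMap.mul' R H ∘ₗ
        (HopfAlgebra.antipode (R := R) (A := H)).rTensor H ∘ₗ Coalgebra.comul) := by
        simp only [LinearMap.comp_assoc]
    _ = (f : H →ₗ[R] H') ∘ₗ (Algebra.linearMap R H ∘ₗ Coalgebra.counit) := by
        rw [HopfAlgebra.mul_antipode_rTensor_comul]
    _ = Algebra.linearMap R H' ∘ₗ Coalgebra.counit := by
        rw [← LinearMap.comp_assoc, bialg_unit_comp]

lemma claim2 : convP (R := R) (f : H →ₗ[R] H')
      (HopfAlgebra.antipode R ∘ₗ (f : H →ₗ[R] H'))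
    = Algebra.linearMap R H' ∘ₗ Coalgebra.counit := by
  unfold convP
  have h1 : TensorProduct.map (f : H →ₗ[R] H') (HopfAlgebra.antipode R ∘ₗ (f : H →ₗ[R] H'))
      = (HopfAlgebra.antipode (R := R) (A := H')).lTensor H' ∘ₗ
        TensorProduct.map (f : H →ₗ[R] H') (f : H →ₗ[R] H') := by
    apply TensorProduct.ext'; intro x y; simp
  rw [h1]
  calc LinearMap.mul' R H' ∘ₗ ((HopfAlgebra.antipode (R := R) (A := H')).lTensor H' ∘ₗ
        TensorProduct.map (f : H →ₗ[R] H') (f : H →ₗ[R] H')) ∘ₗ Coalgebra.comul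
      = (LinearMap.mul' R H' ∘ₗ (HopfAlgebra.antipode (R := R) (A := H')).lTensor H') ∘ₗ
        (TensorProduct.map (f : H →ₗ[R] H') (f : H →ₗ[R] H') ∘ₗ Coalgebra.comul) := by
        simp only [LinearMap.comp_assoc]
    _ = (LinearMap.mul' R H' ∘ₗ (HopfAlgebra.antipode (R := R) (A := H')).lTensor H') ∘ₗ
        (Coalgebra.comul ∘ₗ (f : H →ₗ[R] H')) := by
        have hcc : TensorProduct.map (f : H →ₗ[R] H') (f : H →ₗ[R] H') ∘ₗ Coalgebra.comul
            = Coalgebra.comul ∘ₗ (f : H →ₗ[R] H') := CoalgHomClass.map_comp_comul f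
        rw [hcc]
    _ = (LinearMap.mul' R H' ∘ₗ (HopfAlgebra.antipode (R := R) (A := H')).lTensor H' ∘ₗ
        Coalgebra.comul) ∘ₗ (f : H →ₗ[R] H') := by simp only [LinearMap.comp_assoc]
    _ = (Algebra.linearMap R H' ∘ₗ Coalgebra.counit) ∘ₗ (f : H →ₗ[R] H') := by
        rw [HopfAlgebra.mul_antipode_lTensor_comul]
    _ = Algebra.linearMap R H' ∘ₗ Coalgebra.counit := by
        have hcu : Coalgebra.counit ∘ₗ (f : H →ₗ[R] H') = (Coalgebra.counit : H →ₗ[R] R) :=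
          CoalgHomClass.counit_comp f
        rw [LinearMap.comp_assoc, hcu]
end BH2


section AntiMul
variable {R A : Type*} [CommRing R] [Ring A] [HopfAlgebra R A]

local notation "S" => HopfAlgebra.antipode (R := R) (A := A)
local notation "Δ" => Coalgebra.comul (R := R) (A := A)
local notation "ε" => Coalgebra.counit (R := R) (A := A)

lemma sum_counit_smul {a : A} {ι : Type*} (r : Coalgebra.Repr R a ι) :
    ∑ i ∈ r.index, Coalgebra.counit (R := R) (r.left i) • r.right i = a := by
  have h2 := congrArg (⇑(TensorProduct.lid R A)) (Coalgebra.sum_counit_tmul_eq r)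
  rw [map_sum] at h2
  simp only [TensorProduct.lid_tmul, one_smul] at h2
  exact h2

lemma sum_smul_counit {a : A} {ι : Type*} (r : Coalgebra.Repr R a ι) :
    ∑ i ∈ r.index, Coalgebra.counit (R := R) (r.right i) • r.left i = a := by
  have h2 := congrArg (⇑(TensorProduct.rid R A)) (Coalgebra.sum_tmul_counit_eq r)
  rw [map_sum] at h2
  simp only [TensorProduct.rid_tmul, one_smul] at h2
  exact h2

/-- A representation of `a*b` built from representations of `a` and `b`. -/
noncomputable def mulRepr {a b : A} {ι κ : Type*} (ra : Coalgebra.Repr R a ι)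
    (rb : Coalgebra.Repr R b κ) :
    Coalgebra.Repr R (a * b) (ι × κ) where
  index := ra.index ×ˢ rb.index
  left := fun p => ra.left p.1 * rb.left p.2
  right := fun p => ra.right p.1 * rb.right p.2
  eq := by
    rw [Finset.sum_product]
    have h : Coalgebra.comul (R := R) (a * b) = Coalgebra.comul a * Coalgebra.comul b :=
      Bialgebra.comul_mul a b
    rw [h, ← ra.eq, ← rb.eq, Finset.sum_mul_sum]
    simp [Algebra.TensorProduct.tmul_mul_tmul]

/-- `x ⊗ y ↦ S y * S x`. -/
noncomputable def Pmap : A ⊗[R] A →ₗ[R] A :=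
  LinearMap.mul' R A ∘ₗ TensorProduct.map S S ∘ₗ (TensorProduct.comm R A A).toLinearMap

@[simp] lemma Pmap_tmul (x y : A) : (Pmap (R := R) (x ⊗ₜ y) : A) = S y * S x := rfl

/-- `(x₁ ⊗ x₂) ⊗ (y₁ ⊗ y₂) ↦ (x₁ y₁) * (S y₂ * S x₂)`. -/
noncomputable def ThetaY : (A ⊗[R] A) ⊗[R] (A ⊗[R] A) →ₗ[R] A :=
  LinearMap.mul' R A ∘ₗ TensorProduct.map (LinearMap.mul' R A) Pmap ∘ₗ
    (TensorProduct.tensorTensorTensorComm R A A A A).toLinearMap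

@[simp] lemma ThetaY_tmul (x₁ x₂ y₁ y₂ : A) :
    (ThetaY (R := R) ((x₁ ⊗ₜ x₂) ⊗ₜ (y₁ ⊗ₜ y₂)) : A) = (x₁ * y₁) * (S y₂ * S x₂) := rfl

/-- `(x₁ ⊗ x₂) ⊗ (y₁ ⊗ y₂) ↦ S (x₁ y₁) * (x₂ y₂)`. -/
noncomputable def ThetaX : (A ⊗[R] A) ⊗[R] (A ⊗[R] A) →ₗ[R] A :=
  LinearMap.mul' R A ∘ₗ TensorProduct.map (S ∘ₗ LinearMap.mul' R A) (LinearMap.mul' R A) ∘ₗ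
    (TensorProduct.tensorTensorTensorComm R A A A A).toLinearMap

@[simp] lemma ThetaX_tmul (x₁ x₂ y₁ y₂ : A) :
    (ThetaX (R := R) ((x₁ ⊗ₜ x₂) ⊗ₜ (y₁ ⊗ₜ y₂)) : A) = S (x₁ * y₁) * (x₂ * y₂) := rfl

lemma thetaY_comul (x y : A) :
    (ThetaY (R := R) (Δ x ⊗ₜ Δ y) : A) = algebraMap R A (ε x * ε y) := by
  rw [← (ℛ R x).eq, ← (ℛ R y).eq, TensorProduct.sum_tmul]
  simp only [TensorProduct.tmul_sum, map_sum, ThetaY_tmul]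
  calc ∑ i ∈ (ℛ R x).index, ∑ j ∈ (ℛ R y).index,
        ((ℛ R x).left i * (ℛ R y).left j) * (S ((ℛ R y).right j) * S ((ℛ R x).right i))
      = ∑ i ∈ (ℛ R x).index, (ℛ R x).left i *
          ((∑ j ∈ (ℛ R y).index, (ℛ R y).left j * S ((ℛ R y).right j)) * S ((ℛ R x).right i)) := by
        refine Finset.sum_congr rfl fun i _ => ?_
        rw [Finset.sum_mul, Finset.mul_sum]
        refine Finset.sum_congr rfl fun j _ => ?_
        rw [mul_assoc, ← mul_assoc ((ℛ R y).left j)]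
    _ = ∑ i ∈ (ℛ R x).index, Coalgebra.counit (R := R) y •
          ((ℛ R x).left i * S ((ℛ R x).right i)) := by
        rw [HopfAlgebra.sum_mul_antipode_eq_algebraMap_counit (ℛ R y)]
        refine Finset.sum_congr rfl fun i _ => ?_
        rw [← Algebra.smul_def, mul_smul_comm]
    _ = Coalgebra.counit (R := R) y • algebraMap R A (Coalgebra.counit (R := R) x) := by
        rw [← Finset.smul_sum, HopfAlgebra.sum_mul_antipode_eq_algebraMap_counit (ℛ R x)]
    _ = algebraMap R A (ε x * ε y) := by
        rw [Algebra.smul_def, ← map_mul, mul_comm]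

lemma thetaX_comul (x y : A) :
    (ThetaX (R := R) (Δ x ⊗ₜ Δ y) : A) = algebraMap R A (Coalgebra.counit (R := R) (x * y)) := by
  rw [← (ℛ R x).eq, ← (ℛ R y).eq, TensorProduct.sum_tmul]
  simp only [TensorProduct.tmul_sum, map_sum, ThetaX_tmul]
  have h := HopfAlgebra.sum_antipode_mul_eq_algebraMap_counit (mulRepr (ℛ R x) (ℛ R y))
  rw [← h]
  simp only [mulRepr, Finset.sum_product]

/-- The big evaluation map. -/
noncomputable def PhiMap : (A ⊗[R] (A ⊗[R] A)) ⊗[R] (A ⊗[R] (A ⊗[R] A)) →ₗ[R] A :=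
  LinearMap.mul' R A ∘ₗ TensorProduct.map (S ∘ₗ LinearMap.mul' R A) ThetaY ∘ₗ
    (TensorProduct.tensorTensorTensorComm R A (A ⊗[R] A) A (A ⊗[R] A)).toLinearMap

lemma PhiMap_semi (x₁ y₁ : A) (u v : A ⊗[R] A) :
    (PhiMap (R := R) ((x₁ ⊗ₜ u) ⊗ₜ (y₁ ⊗ₜ v)) : A)
      = S (x₁ * y₁) * ThetaY (R := R) (u ⊗ₜ v) := by
  simp [PhiMap]

noncomputable def PhiMap' : ((A ⊗[R] A) ⊗[R] A) ⊗[R] ((A ⊗[R] A) ⊗[R] A) →ₗ[R] A :=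
  PhiMap ∘ₗ TensorProduct.map (TensorProduct.assoc R A A A).toLinearMap
    (TensorProduct.assoc R A A A).toLinearMap

lemma PhiMap'_semi (x₃ y₃ : A) (u v : A ⊗[R] A) :
    (PhiMap' (R := R) ((u ⊗ₜ x₃) ⊗ₜ (v ⊗ₜ y₃)) : A)
      = ThetaX (R := R) (u ⊗ₜ v) * (S y₃ * S x₃) := by
  induction u using TensorProduct.induction_on with
  | zero =>
    simp only [TensorProduct.zero_tmul, TensorProduct.tmul_zero, LinearMap.map_zero, zero_mul,
      mul_zero]
  | tmul p q =>
    induction v using TensorProduct.induction_on with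
    | zero =>
      simp only [TensorProduct.zero_tmul, TensorProduct.tmul_zero, LinearMap.map_zero, zero_mul,
        mul_zero]
    | tmul r s =>
      simp [PhiMap', PhiMap_semi, mul_assoc]
    | add v₁ v₂ h₁ h₂ =>
      simp only [TensorProduct.add_tmul, TensorProduct.tmul_add, map_add, h₁, h₂, add_mul]
  | add u₁ u₂ h₁ h₂ =>
    simp only [TensorProduct.add_tmul, TensorProduct.tmul_add, map_add, h₁, h₂, add_mul]

theorem antipode_mul_anti (a b : A) : S (a * b) = S b * S a := by
  have hA := Coalgebra.coassoc_apply (R := R) a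
  have hB := Coalgebra.coassoc_apply (R := R) b
  have e1 : ∀ c : A, (Coalgebra.comul (R := R) (A := A)).lTensor A (Δ c)
      = ∑ i ∈ (ℛ R c).index, (ℛ R c).left i ⊗ₜ[R] Δ ((ℛ R c).right i) := by
    intro c
    conv_lhs => rw [← (ℛ R c).eq]
    rw [map_sum]
    simp
  have e2 : ∀ c : A, (Coalgebra.comul (R := R) (A := A)).rTensor A (Δ c)
      = ∑ i ∈ (ℛ R c).index, Δ ((ℛ R c).left i) ⊗ₜ[R] (ℛ R c).right i := by
    intro c
    conv_lhs => rw [← (ℛ R c).eq]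
    rw [map_sum]
    simp
  have hR : (PhiMap (R := R) (((Coalgebra.comul (R := R) (A := A)).lTensor A (Δ a)) ⊗ₜ
      ((Coalgebra.comul (R := R) (A := A)).lTensor A (Δ b))) : A) = S (a * b) := by
    rw [e1 a, e1 b, TensorProduct.sum_tmul]
    simp only [TensorProduct.tmul_sum, map_sum, PhiMap_semi, thetaY_comul]
    calc ∑ i ∈ (ℛ R a).index, ∑ j ∈ (ℛ R b).index,
          S ((ℛ R a).left i * (ℛ R b).left j) *
            algebraMap R A (Coalgebra.counit (R := R) ((ℛ R a).right i) *
              Coalgebra.counit (R := R) ((ℛ R b).right j))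
        = ∑ i ∈ (ℛ R a).index, ∑ j ∈ (ℛ R b).index,
            (Coalgebra.counit (R := R) ((ℛ R a).right i) *
              Coalgebra.counit (R := R) ((ℛ R b).right j)) •
              S ((ℛ R a).left i * (ℛ R b).left j) := by
          refine Finset.sum_congr rfl fun i _ => Finset.sum_congr rfl fun j _ => ?_
          rw [← Algebra.commutes, ← Algebra.smul_def]
      _ = S (a * b) := by
          conv_rhs => rw [← sum_smul_counit (ℛ R a), ← sum_smul_counit (ℛ R b)]
          rw [Finset.sum_mul_sum, map_sum]
          refine Finset.sum_congr rfl fun i _ => ?_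
          rw [map_sum]
          refine Finset.sum_congr rfl fun j _ => ?_
          rw [smul_mul_smul_comm, map_smul]
  have hL : (PhiMap' (R := R) (((Coalgebra.comul (R := R) (A := A)).rTensor A (Δ a)) ⊗ₜ
      ((Coalgebra.comul (R := R) (A := A)).rTensor A (Δ b))) : A) = S b * S a := by
    rw [e2 a, e2 b, TensorProduct.sum_tmul]
    simp only [TensorProduct.tmul_sum, map_sum, PhiMap'_semi, thetaX_comul]
    calc ∑ i ∈ (ℛ R a).index, ∑ j ∈ (ℛ R b).index,
          algebraMap R A (Coalgebra.counit (R := R) ((ℛ R a).left i * (ℛ R b).left j)) *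
            (S ((ℛ R b).right j) * S ((ℛ R a).right i))
        = ∑ i ∈ (ℛ R a).index, ∑ j ∈ (ℛ R b).index,
            (Coalgebra.counit (R := R) ((ℛ R b).left j) *
              Coalgebra.counit (R := R) ((ℛ R a).left i)) •
              (S ((ℛ R b).right j) * S ((ℛ R a).right i)) := by
          refine Finset.sum_congr rfl fun i _ => Finset.sum_congr rfl fun j _ => ?_
          rw [Bialgebra.counit_mul, ← Algebra.smul_def, mul_comm]
      _ = S b * S a := by
          conv_rhs => rw [← _root_.sum_counit_smul (ℛ R b), ← _root_.sum_counit_smul (ℛ R a)]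
          rw [map_sum, map_sum, Finset.sum_mul_sum, Finset.sum_comm]
          refine Finset.sum_congr rfl fun i _ => Finset.sum_congr rfl fun j _ => ?_
          rw [map_smul, map_smul, smul_mul_smul]
  have bridge : (PhiMap' (R := R) (((Coalgebra.comul (R := R) (A := A)).rTensor A (Δ a)) ⊗ₜ
      ((Coalgebra.comul (R := R) (A := A)).rTensor A (Δ b))) : A)
      = PhiMap (R := R) (((Coalgebra.comul (R := R) (A := A)).lTensor A (Δ a)) ⊗ₜ
      ((Coalgebra.comul (R := R) (A := A)).lTensor A (Δ b))) := by
    show (PhiMap (R := R)) (TensorProduct.map _ _ _) = _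
    rw [TensorProduct.map_tmul]
    rw [show (TensorProduct.assoc R A A A).toLinearMap
        ((Coalgebra.comul (R := R) (A := A)).rTensor A (Δ a))
        = (Coalgebra.comul (R := R) (A := A)).lTensor A (Δ a) from hA,
      show (TensorProduct.assoc R A A A).toLinearMap
        ((Coalgebra.comul (R := R) (A := A)).rTensor A (Δ b))
        = (Coalgebra.comul (R := R) (A := A)).lTensor A (Δ b) from hB]
  rw [← hR, ← bridge, hL]

end AntiMul


section NilGcd
variable {R : Type*} [CommRing R]

lemma unip_mul {y z : R} (hy : IsNilpotent (1 - y)) (hz : IsNilpotent (1 - z)) :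
    IsNilpotent (1 - y * z) := by
  have h : 1 - y * z = (1 - y) * z + (1 - z) := by ring
  rw [h]
  exact Commute.isNilpotent_add (Commute.all _ _)
    (Commute.isNilpotent_mul_right (Commute.all _ _) hy) hz

lemma unip_pow {y : R} (hy : IsNilpotent (1 - y)) (s : ℕ) : IsNilpotent (1 - y ^ s) := by
  induction s with
  | zero => simpa using IsNilpotent.zero
  | succ n ih => rw [pow_succ]; exact unip_mul ih hy

lemma unip_unit {y : R} (hy : IsNilpotent (1 - y)) : IsUnit y := by
  simpa using hy.isUnit_one_sub

lemma bezout_nat (a b : ℕ) (ha : 0 < a) (hb : 0 < b) :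
    ∃ s t : ℕ, Nat.gcd a b + b * t = a * s := by
  have h := Nat.gcd_eq_gcd_ab a b
  set A := Nat.gcdA a b with hA
  set B := Nat.gcdB a b with hB
  set k : ℤ := (A.natAbs : ℤ) + (B.natAbs : ℤ) + 1 with hk
  have hA1 : -A ≤ (A.natAbs : ℤ) := by
    rw [← Int.abs_eq_natAbs]; exact neg_le_abs A
  have hB1 : B ≤ (B.natAbs : ℤ) := by
    rw [← Int.abs_eq_natAbs]; exact le_abs_self B
  have hb1 : (1 : ℤ) ≤ b := by exact_mod_cast hb
  have ha1 : (1 : ℤ) ≤ a := by exact_mod_cast ha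
  have hk0 : 0 ≤ k := by positivity
  have hs : (0:ℤ) ≤ A + k * b := by nlinarith
  have ht : (0:ℤ) ≤ k * a - B := by nlinarith
  refine ⟨(A + k * b).toNat, (k * a - B).toNat, ?_⟩
  have key : ((Nat.gcd a b : ℕ) : ℤ) + b * ((k * a - B).toNat : ℤ)
      = a * ((A + k * b).toNat : ℤ) := by
    rw [Int.toNat_of_nonneg hs, Int.toNat_of_nonneg ht, h]; ring
  exact_mod_cast key

lemma unip_gcd {x : R} {a b : ℕ} (ha : 0 < a) (hb : 0 < b)
    (hxa : IsNilpotent (1 - x ^ a)) (hxb : IsNilpotent (1 - x ^ b)) :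
    IsNilpotent (1 - x ^ Nat.gcd a b) := by
  obtain ⟨s, t, hst⟩ := bezout_nat a b ha hb
  have h1 : IsNilpotent (1 - x ^ (a * s)) := by rw [pow_mul]; exact unip_pow hxa s
  have h2 : IsNilpotent (1 - x ^ (b * t)) := by rw [pow_mul]; exact unip_pow hxb t
  obtain ⟨u, hu'⟩ := unip_unit h2
  have hg : x ^ Nat.gcd a b = x ^ (a * s) * ↑u⁻¹ := by
    have h3 : x ^ Nat.gcd a b * ↑u = x ^ (a * s) := by rw [hu', ← pow_add, hst]
    rw [← h3, Units.mul_inv_cancel_right]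
  have h2' : IsNilpotent ((↑u : R) - 1) := by
    rw [hu', ← neg_sub]; exact h2.neg
  have hinv : IsNilpotent (1 - (↑u⁻¹ : R)) := by
    have h4 : 1 - (↑u⁻¹ : R) = (↑u⁻¹ : R) * (↑u - 1) := by
      rw [mul_sub, Units.inv_mul, mul_one]
    rw [h4]
    exact Commute.isNilpotent_mul_left (Commute.all _ _) h2'
  rw [hg]
  exact unip_mul h1 hinv

end NilGcd

section Binom
variable {A : Type*} [Ring A] [Algebra ℂ A]

lemma binom_expand (u : A) (N : ℕ) :
    ∑ k ∈ Finset.range (N + 1), ((-1 : ℂ) ^ k * (N.choose k : ℂ)) • u ^ k = (1 - u) ^ N := by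
  have h : (1 - u) ^ N = (-u + 1) ^ N := by rw [sub_eq_neg_add]
  rw [h, Commute.add_pow (Commute.one_right (-u)) N]
  refine Finset.sum_congr rfl fun k _ => ?_
  rw [one_pow, mul_one]
  calc ((-1 : ℂ) ^ k * (N.choose k : ℂ)) • u ^ k
      = ((-1 : A) ^ k * ((N.choose k : ℕ) : A)) * u ^ k := by
        rw [Algebra.smul_def, map_mul, map_pow, map_neg, map_one, map_natCast]
    _ = (-u) ^ k * ((N.choose k : ℕ) : A) := by
        rw [neg_pow u k, mul_assoc, (Nat.cast_commute (N.choose k) (u ^ k)).eq, ← mul_assoc]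

end Binom

section Ann
variable {V : Type*} [AddCommGroup V] [Module ℂ V]

/-- The annihilator ideal of `e` under the `ℂ[X]`-action induced by `L`. -/
noncomputable def annId (L : Module.End ℂ V) (e : V) : Ideal (Polynomial ℂ) where
  carrier := {q | (Polynomial.aeval L q) e = 0}
  add_mem' := by
    intro p q hp hq
    simp only [Set.mem_setOf_eq, map_add, LinearMap.add_apply] at *
    rw [hp, hq, add_zero]
  zero_mem' := by simp
  smul_mem' := by
    intro c q hq
    simp only [Set.mem_setOf_eq, smul_eq_mul, map_mul, Module.End.mul_apply] at *
    rw [hq, map_zero]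

lemma mem_annId {L : Module.End ℂ V} {e : V} {q : Polynomial ℂ} :
    q ∈ annId L e ↔ (Polynomial.aeval L q) e = 0 := Iff.rfl

/-- If `(1 - L^a)^N e = 0` and `(1 - L^b)^M e = 0` then `(1 - L^gcd)^K e = 0`. -/
lemma gcd_nil (L : Module.End ℂ V) (e : V) {a b N M : ℕ} (ha : 0 < a) (hb : 0 < b)
    (hNa : ((1 - L ^ a) ^ N) e = 0) (hMb : ((1 - L ^ b) ^ M) e = 0) :
    ∃ K : ℕ, 0 < K ∧ ((1 - L ^ Nat.gcd a b) ^ K) e = 0 := by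
  classical
  set I := annId L e
  set x : Polynomial ℂ ⧸ I := Ideal.Quotient.mk I Polynomial.X with hx
  have key : ∀ (c K : ℕ), ((1 - L ^ c) ^ K) e = 0 ↔ (1 - x ^ c) ^ K = 0 := by
    intro c K
    have h5 : (1 - x ^ c) ^ K
        = Ideal.Quotient.mk I (((1 - Polynomial.X ^ c : Polynomial ℂ)) ^ K) := by
      simp [hx]
    rw [h5, Ideal.Quotient.eq_zero_iff_mem]
    show _ ↔ _ ∈ annId L e
    rw [mem_annId]
    have h6 : (Polynomial.aeval L (((1 - Polynomial.X ^ c : Polynomial ℂ)) ^ K))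
        = (1 - L ^ c) ^ K := by simp
    rw [h6]
  have hxa : IsNilpotent (1 - x ^ a) := ⟨N, ((key a N).1 hNa)⟩
  have hxb : IsNilpotent (1 - x ^ b) := ⟨M, ((key b M).1 hMb)⟩
  obtain ⟨K, hK⟩ := unip_gcd ha hb hxa hxb
  refine ⟨K + 1, Nat.succ_pos K, ?_⟩
  rw [key]
  rw [pow_succ, hK, zero_mul]

end Ann

section Sandwich
variable {R H H' : Type*} [CommRing R] [Ring H] [HopfAlgebra R H] [Ring H'] [HopfAlgebra R H']
  (f : H →ₐc[R] H')

theorem antipode_comp_bialgHom :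
    HopfAlgebra.antipode (R := R) (A := H') ∘ₗ (f : H →ₗ[R] H')
      = (f : H →ₗ[R] H') ∘ₗ HopfAlgebra.antipode (R := R) (A := H) := by
  have h1 := claim1 f
  have h2 := claim2 f
  calc HopfAlgebra.antipode (R := R) (A := H') ∘ₗ (f : H →ₗ[R] H')
      = convP (R := R) (Algebra.linearMap R H' ∘ₗ Coalgebra.counit)
          (HopfAlgebra.antipode R ∘ₗ (f : H →ₗ[R] H')) := (convP_unit_left _).symm
    _ = convP (R := R) (convP (R := R) ((f : H →ₗ[R] H') ∘ₗ HopfAlgebra.antipode R)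
          (f : H →ₗ[R] H')) (HopfAlgebra.antipode R ∘ₗ (f : H →ₗ[R] H')) := by rw [h1]
    _ = convP (R := R) ((f : H →ₗ[R] H') ∘ₗ HopfAlgebra.antipode R)
          (convP (R := R) (f : H →ₗ[R] H')
            (HopfAlgebra.antipode R ∘ₗ (f : H →ₗ[R] H'))) := convP_assoc _ _ _
    _ = convP (R := R) ((f : H →ₗ[R] H') ∘ₗ HopfAlgebra.antipode R)
          (Algebra.linearMap R H' ∘ₗ Coalgebra.counit) := by rw [h2]
    _ = (f : H →ₗ[R] H') ∘ₗ HopfAlgebra.antipode R := convP_unit_right _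

end Sandwich

section AntipodeOne
variable {R A : Type*} [CommRing R] [Ring A] [HopfAlgebra R A]

lemma antipode_one' : HopfAlgebra.antipode (R := R) (A := A) 1 = 1 := by
  have h := HopfAlgebra.mul_antipode_rTensor_comul_apply (R := R) (A := A) 1
  rw [Bialgebra.comul_one] at h
  simpa [Algebra.TensorProduct.one_def] using h

end AntipodeOne

section SigmaFacts
variable {H : Type*} [Ring H] [HopfAlgebra ℂ H] (Sinv : H →ₗ[ℂ] H)
  (hS₁ : Sinv ∘ₗ HopfAlgebra.antipode (R := ℂ) (A := H) = LinearMap.id)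
  (hS₂ : HopfAlgebra.antipode (R := ℂ) (A := H) ∘ₗ Sinv = LinearMap.id)

include hS₁ in
lemma Sinv_S (x : H) : Sinv (HopfAlgebra.antipode (R := ℂ) x) = x := by
  have := LinearMap.congr_fun hS₁ x; simpa using this

include hS₂ in
lemma S_Sinv (x : H) : HopfAlgebra.antipode (R := ℂ) (Sinv x) = x := by
  have := LinearMap.congr_fun hS₂ x; simpa using this

include hS₁ hS₂ in
lemma Sinv_mul (x y : H) : Sinv (x * y) = Sinv y * Sinv x := by
  have hinj : Function.Injective (HopfAlgebra.antipode (R := ℂ) (A := H)) := by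
    intro u v huv
    have hu := Sinv_S Sinv hS₁ u
    have hv := Sinv_S Sinv hS₁ v
    rw [← hu, ← hv, huv]
  apply hinj
  rw [S_Sinv Sinv hS₂, antipode_mul_anti, S_Sinv Sinv hS₂, S_Sinv Sinv hS₂]

include hS₁ in
lemma Sinv_one : Sinv (1 : H) = 1 := by
  have := Sinv_S Sinv hS₁ (1 : H)
  rwa [antipode_one'] at this

include hS₁ hS₂ in
lemma sigma_mul (x y : H) : (Sinv ∘ₗ Sinv) (x * y) = (Sinv ∘ₗ Sinv) x * (Sinv ∘ₗ Sinv) y := by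
  simp only [LinearMap.comp_apply]
  rw [Sinv_mul Sinv hS₁ hS₂, Sinv_mul Sinv hS₁ hS₂]

include hS₁ hS₂ in
lemma sigma_mul'_comp : (Sinv ∘ₗ Sinv) ∘ₗ LinearMap.mul' ℂ H
    = LinearMap.mul' ℂ H ∘ₗ TensorProduct.map (Sinv ∘ₗ Sinv) (Sinv ∘ₗ Sinv) := by
  apply TensorProduct.ext'
  intro x y
  simp only [LinearMap.comp_apply, TensorProduct.map_tmul, LinearMap.mul'_apply]
  exact sigma_mul Sinv hS₁ hS₂ x y

include hS₁ in
lemma sigma_unit_comp : (Sinv ∘ₗ Sinv) ∘ₗ Algebra.linearMap ℂ H = Algebra.linearMap ℂ H := by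
  ext r
  simp only [LinearMap.comp_apply, Algebra.linearMap_apply, Algebra.algebraMap_eq_smul_one,
    map_smul]
  rw [Sinv_one Sinv hS₁, Sinv_one Sinv hS₁]

end SigmaFacts

/-- The maps `T_n : H → H`: `T_0 = ι ∘ ε`, and `T_{n+1} = m ∘ (T_n ⊗ S^{-2n}) ∘ Δ`, i.e.
`T_n = m_n ∘ (Id ⊗ S⁻² ⊗ S⁻⁴ ⊗ ⋯ ⊗ S^{-2n+2}) ∘ Δ_n` where `m_n = m ∘ (m_{n-1} ⊗ Id)` and
`Δ_n = (Δ_{n-1} ⊗ Id) ∘ Δ`.  Here `Sinv` is the inverse of the antipode. -/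
noncomputable def qeT (H : Type*) [Ring H] [Bialgebra ℂ H] (Sinv : H →ₗ[ℂ] H) :
    ℕ → (H →ₗ[ℂ] H)
  | 0 => Algebra.linearMap ℂ H ∘ₗ Coalgebra.counit
  | n + 1 =>
      LinearMap.mul' ℂ H ∘ₗ TensorProduct.map (qeT H Sinv n) ((Sinv ∘ₗ Sinv) ^ n)
        ∘ₗ Coalgebra.comul

/-- A positive integer `n` satisfies the quasi-exponent condition for `H` if
`∑_{k=0}^N (-1)^k (N choose k) T_{nk} = 0` for some positive integer `N`. -/
noncomputable def qexpCond (H : Type*) [Ring H] [Bialgebra ℂ H] (Sinv : H →ₗ[ℂ] H)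
    (n : ℕ) : Prop :=
  ∃ N : ℕ, 0 < N ∧
    ∑ k ∈ Finset.range (N + 1), ((-1 : ℂ) ^ k * (N.choose k : ℂ)) • qeT H Sinv (n * k) = 0

section LopSec
variable {H : Type*} [Ring H] [Bialgebra ℂ H]

lemma comp_convP {φ : H →ₗ[ℂ] H}
    (hφ : φ ∘ₗ LinearMap.mul' ℂ H = LinearMap.mul' ℂ H ∘ₗ TensorProduct.map φ φ)
    (f g : H →ₗ[ℂ] H) :
    φ ∘ₗ convP (R := ℂ) f g = convP (R := ℂ) (φ ∘ₗ f) (φ ∘ₗ g) := by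
  unfold convP
  have h1 : TensorProduct.map (φ ∘ₗ f) (φ ∘ₗ g)
      = TensorProduct.map φ φ ∘ₗ TensorProduct.map f g := by
    apply TensorProduct.ext'; intro x y; simp
  rw [h1]
  calc φ ∘ₗ LinearMap.mul' ℂ H ∘ₗ TensorProduct.map f g ∘ₗ Coalgebra.comul
      = (φ ∘ₗ LinearMap.mul' ℂ H) ∘ₗ TensorProduct.map f g ∘ₗ Coalgebra.comul := by
        simp only [LinearMap.comp_assoc]
    _ = (LinearMap.mul' ℂ H ∘ₗ TensorProduct.map φ φ) ∘ₗ TensorProduct.map f g ∘ₗ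
        Coalgebra.comul := by rw [hφ]
    _ = LinearMap.mul' ℂ H ∘ₗ (TensorProduct.map φ φ ∘ₗ TensorProduct.map f g) ∘ₗ
        Coalgebra.comul := by simp only [LinearMap.comp_assoc]

/-- Left convolution-type operator `g ↦ Id ⋆ (σ ∘ g)`. -/
noncomputable def Lop (σ : H →ₗ[ℂ] H) : (H →ₗ[ℂ] H) →ₗ[ℂ] (H →ₗ[ℂ] H) where
  toFun g := convP (R := ℂ) LinearMap.id (σ ∘ₗ g)
  map_add' g₁ g₂ := by
    unfold convP
    rw [LinearMap.comp_add, TensorProduct.map_add_right, LinearMap.add_comp, LinearMap.comp_add]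
  map_smul' c g := by
    unfold convP
    dsimp only [RingHom.id_apply]
    rw [LinearMap.comp_smul, TensorProduct.map_smul_right, LinearMap.smul_comp,
      LinearMap.comp_smul]

lemma Lop_apply (σ g : H →ₗ[ℂ] H) : Lop σ g = convP (R := ℂ) LinearMap.id (σ ∘ₗ g) := rfl

lemma qeT_succ (Sinv : H →ₗ[ℂ] H) (n : ℕ) :
    qeT H Sinv (n + 1) = convP (R := ℂ) (qeT H Sinv n) ((Sinv ∘ₗ Sinv) ^ n) := rfl

lemma qeT_zero (Sinv : H →ₗ[ℂ] H) :
    qeT H Sinv 0 = Algebra.linearMap ℂ H ∘ₗ Coalgebra.counit := rfl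

variable (Sinv : H →ₗ[ℂ] H)
  (hm : (Sinv ∘ₗ Sinv) ∘ₗ LinearMap.mul' ℂ H
    = LinearMap.mul' ℂ H ∘ₗ TensorProduct.map (Sinv ∘ₗ Sinv) (Sinv ∘ₗ Sinv))
  (hu : (Sinv ∘ₗ Sinv) ∘ₗ Algebra.linearMap ℂ H = Algebra.linearMap ℂ H)

include hm hu in
lemma Lop_qeT : ∀ n : ℕ, Lop (Sinv ∘ₗ Sinv) (qeT H Sinv n) = qeT H Sinv (n + 1) := by
  intro n
  induction n with
  | zero =>
    rw [Lop_apply, qeT_zero, qeT_succ, qeT_zero, pow_zero, Module.End.one_eq_id]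
    rw [convP_unit_left (R := ℂ) (LinearMap.id : H →ₗ[ℂ] H)]
    have h1 : (Sinv ∘ₗ Sinv) ∘ₗ Algebra.linearMap ℂ H ∘ₗ (Coalgebra.counit : H →ₗ[ℂ] ℂ)
        = Algebra.linearMap ℂ H ∘ₗ (Coalgebra.counit : H →ₗ[ℂ] ℂ) := by
      rw [← LinearMap.comp_assoc, hu]
    rw [h1, convP_unit_right (R := ℂ) (LinearMap.id : H →ₗ[ℂ] H)]
  | succ n ih =>
    have hp : (Sinv ∘ₗ Sinv) ∘ₗ (Sinv ∘ₗ Sinv) ^ n = (Sinv ∘ₗ Sinv) ^ (n + 1) := by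
      rw [pow_succ', Module.End.mul_eq_comp]
    rw [Lop_apply, qeT_succ, comp_convP hm, hp, ← convP_assoc, ← Lop_apply, ih,
      ← qeT_succ]

include hm hu in
lemma qeT_pow : ∀ n : ℕ, qeT H Sinv n = ((Lop (Sinv ∘ₗ Sinv)) ^ n) (qeT H Sinv 0) := by
  intro n
  induction n with
  | zero => rw [pow_zero, Module.End.one_eq_id, LinearMap.id_apply]
  | succ n ih =>
    rw [← Lop_qeT Sinv hm hu n, ih, pow_succ', Module.End.mul_eq_comp, LinearMap.comp_apply]

include hm hu in
lemma qexpCond_iff_nil (n : ℕ) :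
    qexpCond H Sinv n ↔ ∃ N : ℕ, 0 < N ∧
      (((1 - (Lop (Sinv ∘ₗ Sinv)) ^ n) ^ N : Module.End ℂ (H →ₗ[ℂ] H)))
        (qeT H Sinv 0) = 0 := by
  have key : ∀ N : ℕ,
      ∑ k ∈ Finset.range (N + 1), ((-1 : ℂ) ^ k * (N.choose k : ℂ)) • qeT H Sinv (n * k)
      = (((1 - (Lop (Sinv ∘ₗ Sinv)) ^ n) ^ N : Module.End ℂ (H →ₗ[ℂ] H)))
        (qeT H Sinv 0) := by
    intro N
    rw [← binom_expand ((Lop (Sinv ∘ₗ Sinv)) ^ n) N, LinearMap.sum_apply]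
    refine Finset.sum_congr rfl fun k _ => ?_
    rw [LinearMap.smul_apply, ← pow_mul, ← qeT_pow Sinv hm hu (n * k)]
  unfold qexpCond
  constructor
  · rintro ⟨N, hN, hsum⟩
    exact ⟨N, hN, by rw [← key N, hsum]⟩
  · rintro ⟨N, hN, hz⟩
    exact ⟨N, hN, by rw [key N, hz]⟩

include hm hu in
lemma qexpCond_gcd {a b : ℕ} (ha : 0 < a) (hb : 0 < b)
    (hca : qexpCond H Sinv a) (hcb : qexpCond H Sinv b) :
    qexpCond H Sinv (Nat.gcd a b) := by
  rw [qexpCond_iff_nil Sinv hm hu] at hca hcb ⊢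
  obtain ⟨N, -, hNa⟩ := hca
  obtain ⟨M, -, hMb⟩ := hcb
  exact gcd_nil _ _ ha hb hNa hMb

end LopSec

section Intertwine
variable {H H' : Type*} [Ring H] [HopfAlgebra ℂ H] [Ring H'] [HopfAlgebra ℂ H']
  (Sinv : H →ₗ[ℂ] H)
  (hS₁ : Sinv ∘ₗ HopfAlgebra.antipode (R := ℂ) (A := H) = LinearMap.id)
  (hS₂ : HopfAlgebra.antipode (R := ℂ) (A := H) ∘ₗ Sinv = LinearMap.id)
  (Sinv' : H' →ₗ[ℂ] H')
  (hS₁' : Sinv' ∘ₗ HopfAlgebra.antipode (R := ℂ) (A := H') = LinearMap.id)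
  (hS₂' : HopfAlgebra.antipode (R := ℂ) (A := H') ∘ₗ Sinv' = LinearMap.id)
  (f : H →ₐc[ℂ] H')

include hS₂ hS₁' in
lemma f_Sinv : (f : H →ₗ[ℂ] H') ∘ₗ Sinv = Sinv' ∘ₗ (f : H →ₗ[ℂ] H') := by
  have hfS := antipode_comp_bialgHom f
  apply LinearMap.ext
  intro x
  simp only [LinearMap.comp_apply]
  show f (Sinv x) = Sinv' (f x)
  have e1 : f (Sinv x) = Sinv' (HopfAlgebra.antipode (R := ℂ) (f (Sinv x))) :=
    (Sinv_S Sinv' hS₁' _).symm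
  have e2 : HopfAlgebra.antipode (R := ℂ) (f (Sinv x)) = f (HopfAlgebra.antipode (R := ℂ) (Sinv x)) :=
    LinearMap.congr_fun hfS (Sinv x)
  rw [e1, e2, S_Sinv Sinv hS₂]

include hS₂ hS₁' in
lemma f_sigma_pow : ∀ n : ℕ,
    (f : H →ₗ[ℂ] H') ∘ₗ ((Sinv ∘ₗ Sinv) ^ n) = ((Sinv' ∘ₗ Sinv') ^ n) ∘ₗ (f : H →ₗ[ℂ] H') := by
  have hbase : (f : H →ₗ[ℂ] H') ∘ₗ (Sinv ∘ₗ Sinv) = (Sinv' ∘ₗ Sinv') ∘ₗ (f : H →ₗ[ℂ] H') := by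
    rw [← LinearMap.comp_assoc, f_Sinv Sinv hS₂ Sinv' hS₁' f, LinearMap.comp_assoc,
      f_Sinv Sinv hS₂ Sinv' hS₁' f, LinearMap.comp_assoc]
  intro n
  induction n with
  | zero => simp [Module.End.one_eq_id]
  | succ n ih =>
    rw [pow_succ', pow_succ', Module.End.mul_eq_comp, Module.End.mul_eq_comp,
      ← LinearMap.comp_assoc, hbase, LinearMap.comp_assoc, ih, ← LinearMap.comp_assoc]

include hS₂ hS₁' in
lemma f_qeT : ∀ n : ℕ,
    (f : H →ₗ[ℂ] H') ∘ₗ qeT H Sinv n = qeT H' Sinv' n ∘ₗ (f : H →ₗ[ℂ] H') := by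
  intro n
  induction n with
  | zero =>
    show (f : H →ₗ[ℂ] H') ∘ₗ (Algebra.linearMap ℂ H ∘ₗ Coalgebra.counit)
        = (Algebra.linearMap ℂ H' ∘ₗ Coalgebra.counit) ∘ₗ (f : H →ₗ[ℂ] H')
    have hcu : Coalgebra.counit ∘ₗ (f : H →ₗ[ℂ] H') = (Coalgebra.counit : H →ₗ[ℂ] ℂ) :=
      CoalgHomClass.counit_comp f
    rw [LinearMap.comp_assoc, hcu, ← LinearMap.comp_assoc, bialg_unit_comp]
  | succ n ih =>
    show (f : H →ₗ[ℂ] H') ∘ₗ (LinearMap.mul' ℂ H ∘ₗ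
        TensorProduct.map (qeT H Sinv n) ((Sinv ∘ₗ Sinv) ^ n) ∘ₗ Coalgebra.comul)
      = (LinearMap.mul' ℂ H' ∘ₗ
        TensorProduct.map (qeT H' Sinv' n) ((Sinv' ∘ₗ Sinv') ^ n) ∘ₗ Coalgebra.comul) ∘ₗ
          (f : H →ₗ[ℂ] H')
    have hmapf : TensorProduct.map (f : H →ₗ[ℂ] H') (f : H →ₗ[ℂ] H') ∘ₗ
        TensorProduct.map (qeT H Sinv n) ((Sinv ∘ₗ Sinv) ^ n)
        = TensorProduct.map (qeT H' Sinv' n) ((Sinv' ∘ₗ Sinv') ^ n) ∘ₗ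
          TensorProduct.map (f : H →ₗ[ℂ] H') (f : H →ₗ[ℂ] H') := by
      rw [← TensorProduct.map_comp, ← TensorProduct.map_comp, ih,
        f_sigma_pow Sinv hS₂ Sinv' hS₁' f]
    have hcc : TensorProduct.map (f : H →ₗ[ℂ] H') (f : H →ₗ[ℂ] H') ∘ₗ Coalgebra.comul
        = Coalgebra.comul ∘ₗ (f : H →ₗ[ℂ] H') := CoalgHomClass.map_comp_comul f
    calc (f : H →ₗ[ℂ] H') ∘ₗ (LinearMap.mul' ℂ H ∘ₗ
        TensorProduct.map (qeT H Sinv n) ((Sinv ∘ₗ Sinv) ^ n) ∘ₗ Coalgebra.comul)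
        = ((f : H →ₗ[ℂ] H') ∘ₗ LinearMap.mul' ℂ H) ∘ₗ
          TensorProduct.map (qeT H Sinv n) ((Sinv ∘ₗ Sinv) ^ n) ∘ₗ Coalgebra.comul := by
          simp only [LinearMap.comp_assoc]
      _ = (LinearMap.mul' ℂ H' ∘ₗ TensorProduct.map (f : H →ₗ[ℂ] H') (f : H →ₗ[ℂ] H')) ∘ₗ
          TensorProduct.map (qeT H Sinv n) ((Sinv ∘ₗ Sinv) ^ n) ∘ₗ Coalgebra.comul := by
          rw [bialg_mul'_comp]
      _ = LinearMap.mul' ℂ H' ∘ₗ (TensorProduct.map (f : H →ₗ[ℂ] H') (f : H →ₗ[ℂ] H') ∘ₗ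
          TensorProduct.map (qeT H Sinv n) ((Sinv ∘ₗ Sinv) ^ n)) ∘ₗ Coalgebra.comul := by
          simp only [LinearMap.comp_assoc]
      _ = LinearMap.mul' ℂ H' ∘ₗ (TensorProduct.map (qeT H' Sinv' n) ((Sinv' ∘ₗ Sinv') ^ n) ∘ₗ
          TensorProduct.map (f : H →ₗ[ℂ] H') (f : H →ₗ[ℂ] H')) ∘ₗ Coalgebra.comul := by
          rw [hmapf]
      _ = LinearMap.mul' ℂ H' ∘ₗ TensorProduct.map (qeT H' Sinv' n) ((Sinv' ∘ₗ Sinv') ^ n) ∘ₗ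
          (TensorProduct.map (f : H →ₗ[ℂ] H') (f : H →ₗ[ℂ] H') ∘ₗ Coalgebra.comul) := by
          simp only [LinearMap.comp_assoc]
      _ = LinearMap.mul' ℂ H' ∘ₗ TensorProduct.map (qeT H' Sinv' n) ((Sinv' ∘ₗ Sinv') ^ n) ∘ₗ
          (Coalgebra.comul ∘ₗ (f : H →ₗ[ℂ] H')) := by rw [hcc]
      _ = (LinearMap.mul' ℂ H' ∘ₗ
          TensorProduct.map (qeT H' Sinv' n) ((Sinv' ∘ₗ Sinv') ^ n) ∘ₗ Coalgebra.comul) ∘ₗ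
          (f : H →ₗ[ℂ] H') := by simp only [LinearMap.comp_assoc]

include hS₂ hS₁' in
lemma cond_transfer (hf : Function.Surjective f) {n : ℕ} (hn : qexpCond H Sinv n) :
    qexpCond H' Sinv' n := by
  obtain ⟨N, hN, hs⟩ := hn
  refine ⟨N, hN, ?_⟩
  apply LinearMap.ext
  intro x'
  obtain ⟨x, rfl⟩ := hf x'
  have hx := LinearMap.congr_fun hs x
  simp only [LinearMap.sum_apply, LinearMap.smul_apply, LinearMap.zero_apply] at hx ⊢
  have hterm : ∀ k, qeT H' Sinv' (n * k) (f x) = f (qeT H Sinv (n * k) x) := fun k =>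
    (LinearMap.congr_fun (f_qeT Sinv hS₂ Sinv' hS₁' f (n * k)) x).symm
  calc ∑ k ∈ Finset.range (N + 1), ((-1 : ℂ) ^ k * (N.choose k : ℂ)) • qeT H' Sinv' (n * k) (f x)
      = ∑ k ∈ Finset.range (N + 1), ((-1 : ℂ) ^ k * (N.choose k : ℂ)) •
          f (qeT H Sinv (n * k) x) := by
        refine Finset.sum_congr rfl fun k _ => ?_; rw [hterm k]
    _ = f (∑ k ∈ Finset.range (N + 1), ((-1 : ℂ) ^ k * (N.choose k : ℂ)) •
          qeT H Sinv (n * k) x) := by rw [map_sum]; simp_rw [map_smul]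
    _ = 0 := by rw [hx, map_zero]

end Intertwine

/-- If `H'` is a Hopf algebra quotient of a finite-dimensional Hopf algebra `H` over `ℂ`
(with bijective antipodes), i.e. there is a surjective bialgebra homomorphism
`f : H → H'`, then every positive integer satisfying the quasi-exponent condition for `H`
also satisfies it for `H'`; in particular `qexp H'` divides `qexp H`. -/
theorem qexpCond_of_hopfQuotient (H H' : Type*) [Ring H] [HopfAlgebra ℂ H]
    [FiniteDimensional ℂ H] [Ring H'] [HopfAlgebra ℂ H'] [FiniteDimensional ℂ H']
    (Sinv : H →ₗ[ℂ] H)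
    (hS₁ : Sinv ∘ₗ HopfAlgebra.antipode (R := ℂ) (A := H) = LinearMap.id)
    (hS₂ : HopfAlgebra.antipode (R := ℂ) (A := H) ∘ₗ Sinv = LinearMap.id)
    (Sinv' : H' →ₗ[ℂ] H')
    (hS₁' : Sinv' ∘ₗ HopfAlgebra.antipode (R := ℂ) (A := H') = LinearMap.id)
    (hS₂' : HopfAlgebra.antipode (R := ℂ) (A := H') ∘ₗ Sinv' = LinearMap.id)
    (f : H →ₐc[ℂ] H') (hf : Function.Surjective f) :
    (∀ n : ℕ, 0 < n → qexpCond H Sinv n → qexpCond H' Sinv' n) ∧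
      sInf {m : ℕ | 0 < m ∧ qexpCond H' Sinv' m} ∣
        sInf {m : ℕ | 0 < m ∧ qexpCond H Sinv m} := by
  have transfer : ∀ {n : ℕ}, qexpCond H Sinv n → qexpCond H' Sinv' n := fun hn =>
    cond_transfer Sinv hS₂ Sinv' hS₁' f hf hn
  constructor
  · exact fun n _ hn => transfer hn
  · set S : Set ℕ := {m : ℕ | 0 < m ∧ qexpCond H Sinv m} with hS
    set S' : Set ℕ := {m : ℕ | 0 < m ∧ qexpCond H' Sinv' m} with hS'
    rcases Set.eq_empty_or_nonempty S with hemp | hne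
    · rw [hemp, Nat.sInf_empty]; exact dvd_zero _
    · obtain ⟨hpos, hcond⟩ := Nat.sInf_mem hne
      have hmem' : sInf S ∈ S' := ⟨hpos, transfer hcond⟩
      have hne' : S'.Nonempty := ⟨sInf S, hmem'⟩
      obtain ⟨hpos', hcond'⟩ := Nat.sInf_mem hne'
      have hm' := sigma_mul'_comp Sinv' hS₁' hS₂'
      have hu' := sigma_unit_comp Sinv' hS₁'
      have hg : qexpCond H' Sinv' (Nat.gcd (sInf S') (sInf S)) :=
        qexpCond_gcd Sinv' hm' hu' hpos' hpos hcond' (transfer hcond)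
      have hgpos : 0 < Nat.gcd (sInf S') (sInf S) := Nat.gcd_pos_of_pos_left _ hpos'
      have h1 : sInf S' ≤ Nat.gcd (sInf S') (sInf S) := Nat.sInf_le ⟨hgpos, hg⟩
      have h2 : Nat.gcd (sInf S') (sInf S) ≤ sInf S' :=
        Nat.le_of_dvd hpos' (Nat.gcd_dvd_left _ _)
      have heq : Nat.gcd (sInf S') (sInf S) = sInf S' := le_antisymm h2 h1
      rw [← heq]
      exact Nat.gcd_dvd_right _ _
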